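/- Any clean C² closed plane curve whose image is centrally symmetric about a point c is reparametrized by the central reflection: there exists a diffeomorphism φ of S¹ with 2c − α(t) = α(φ(t)) for all t. -/

import Mathlib

open Real Set

open Filter Topology Asymptotics

noncomputable section Stmt5Aux

/-- 2×2 determinant of two plane vectors. -/
def det2 (v w : ℝ × ℝ) : ℝ := v.1 * w.2 - v.2 * w.1

/-- dot product of two plane vectors. -/
def dot2 (v w : ℝ × ℝ) : ℝ := v.1 * w.1 + v.2 * w.2

lemma det2_smul_self (v : ℝ × ℝ) (a : ℝ) : det2 v (a • v) = 0 := by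
  simp only [det2, Prod.smul_fst, Prod.smul_snd, smul_eq_mul]; ring

lemma dot2_self_ne {v : ℝ × ℝ} (hv : v ≠ 0) : dot2 v v ≠ 0 := by
  have h : v.1 ≠ 0 ∨ v.2 ≠ 0 := by
    by_contra h; push_neg at h; exact hv (Prod.ext h.1 h.2)
  have : 0 < dot2 v v := by
    simp only [dot2]
    rcases h with h | h <;>
      nlinarith [mul_self_nonneg v.1, mul_self_nonneg v.2, mul_self_pos.mpr h]
  exact ne_of_gt this

lemma exists_smul_of_det2 {v w : ℝ × ℝ} (hw : w ≠ 0) (h : det2 v w = 0) :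
    ∃ a : ℝ, a • w = v := by
  have hw' : w.1 ≠ 0 ∨ w.2 ≠ 0 := by
    by_contra hh; push_neg at hh; exact hw (Prod.ext hh.1 hh.2)
  simp only [det2, sub_eq_zero] at h
  rcases hw' with h1 | h2
  · refine ⟨v.1 / w.1, Prod.ext ?_ ?_⟩ <;> simp only [Prod.smul_fst, Prod.smul_snd, smul_eq_mul]
    · field_simp
    · field_simp; linarith [h]
  · refine ⟨v.2 / w.2, Prod.ext ?_ ?_⟩ <;> simp only [Prod.smul_fst, Prod.smul_snd, smul_eq_mul]
    · field_simp; linarith [h]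
    · field_simp

lemma not_li_of_det2 {v w : ℝ × ℝ} (hw : w ≠ 0) (h : det2 v w = 0) :
    ¬ LinearIndependent ℝ ![v, w] := by
  intro hli
  rw [linearIndependent_fin2] at hli
  obtain ⟨a, ha⟩ := exists_smul_of_det2 hw h
  exact hli.2 a (by simpa using ha)

lemma det2_trans {a b c : ℝ × ℝ} (hb : b ≠ 0) (h1 : det2 a b = 0) (h2 : det2 c b = 0) :
    det2 a c = 0 := by
  have hb' : b.1 ≠ 0 ∨ b.2 ≠ 0 := by
    by_contra hh; push_neg at hh; exact hb (Prod.ext hh.1 hh.2)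
  simp only [det2] at h1 h2 ⊢
  rcases hb' with h | h
  · have : (a.1 * c.2 - a.2 * c.1) * b.1 = 0 := by linear_combination c.1 * h1 - a.1 * h2
    exact (mul_eq_zero.mp this).resolve_right h
  · have : (a.1 * c.2 - a.2 * c.1) * b.2 = 0 := by linear_combination c.2 * h1 - a.2 * h2
    exact (mul_eq_zero.mp this).resolve_right h

lemma dot2_hasDerivAt {f : ℝ → ℝ × ℝ} {f' : ℝ × ℝ} {x : ℝ} (hf : HasDerivAt f f' x)
    (v : ℝ × ℝ) : HasDerivAt (fun t => dot2 (f t) v) (dot2 f' v) x := by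
  have h1 : HasDerivAt (fun t => (f t).1) f'.1 x :=
    (ContinuousLinearMap.fst ℝ ℝ ℝ).hasFDerivAt.comp_hasDerivAt x hf
  have h2 : HasDerivAt (fun t => (f t).2) f'.2 x :=
    (ContinuousLinearMap.snd ℝ ℝ ℝ).hasFDerivAt.comp_hasDerivAt x hf
  show HasDerivAt (fun t => (f t).1 * v.1 + (f t).2 * v.2) _ x
  exact (h1.mul_const v.1).add (h2.mul_const v.2)

/-- A continuous real function taking values in `ℤ • L` is constant. -/
lemma int_const {L : ℝ} (hL : 0 < L) {f : ℝ → ℝ} (hf : Continuous f)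
    (h : ∀ t, ∃ k : ℤ, f t = k * L) (a b : ℝ) : f a = f b := by
  have main : ∀ x y : ℝ, ∀ kx ky : ℤ, f x = kx * L → f y = ky * L →
      f x ≤ f y → kx ≠ ky → False := by
    intro x y kx ky hx hy hxy hne
    have hkxy : (kx : ℝ) * L ≤ ky * L := by rw [← hx, ← hy]; exact hxy
    have hkk : kx ≤ ky := by
      have := le_of_mul_le_mul_right hkxy hL
      exact_mod_cast this
    have hlt : kx + 1 ≤ ky := by omega
    have hlt' : (kx : ℝ) + 1 ≤ (ky : ℝ) := by exact_mod_cast hlt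
    have hy0 : (kx : ℝ) * L + L / 2 ∈ uIcc (f x) (f y) := by
      rw [Set.mem_uIcc]
      left
      constructor
      · rw [hx]; linarith
      · rw [hy]; nlinarith
    obtain ⟨t, _, hft⟩ := intermediate_value_uIcc hf.continuousOn hy0
    obtain ⟨k, hk⟩ := h t
    rw [hft] at hk
    have h2 : ((2 * k : ℤ) : ℝ) * L = ((2 * kx + 1 : ℤ) : ℝ) * L := by
      push_cast
      linarith
    have h3 : (2 * k : ℤ) = 2 * kx + 1 := by
      have := mul_right_cancel₀ (ne_of_gt hL) h2
      exact_mod_cast this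
    omega
  rcases le_total (f a) (f b) with hab | hab
  · obtain ⟨ka, hka⟩ := h a
    obtain ⟨kb, hkb⟩ := h b
    by_contra hne
    exact main a b ka kb hka hkb hab (fun h' => hne (by rw [hka, hkb, h']))
  · obtain ⟨ka, hka⟩ := h a
    obtain ⟨kb, hkb⟩ := h b
    by_contra hne
    exact main b a kb ka hkb hka hab (fun h' => hne (by rw [hka, hkb, h']))


section TestB

variable {α : ℝ → ℝ × ℝ}

lemma seq_key (hC2 : ContDiff ℝ 2 α) (himm : ∀ t, deriv α t ≠ 0)
    {τ t₀ : ℝ} {B : ℝ × ℝ} {G : ℝ → ℝ × ℝ}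
    (hG : HasDerivAt G B t₀) (hB : B ≠ 0) {t u : ℕ → ℝ}
    (ht : Tendsto t atTop (𝓝 t₀)) (htne : ∀ n, t n ≠ t₀)
    (hu : Tendsto u atTop (𝓝 τ)) (hGτ : G t₀ = α τ)
    (heq : ∀ n, α (u n) = G (t n)) :
    ∃ l : ℝ, l ≠ 0 ∧ B = l • deriv α τ := by
  have hαd : ∀ x, HasDerivAt α (deriv α x) x := fun x =>
    ((hC2.differentiable (by norm_num)) x).hasDerivAt
  set A := deriv α τ with hA
  have htt : Tendsto t atTop (𝓝[≠] t₀) :=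
    tendsto_nhdsWithin_of_tendsto_nhds_of_eventually_within _ ht
      (Eventually.of_forall htne)
  have hslope : Tendsto (fun n => slope G t₀ (t n)) atTop (𝓝 B) :=
    (hasDerivAt_iff_tendsto_slope.mp hG).comp htt
  set r : ℕ → ℝ := fun n => (u n - τ) / (t n - t₀) with hr
  set E : ℕ → ℝ × ℝ := fun n => α (u n) - α τ - (u n - τ) • A with hE
  have hEo : (fun n => E n) =o[atTop] (fun n => u n - τ) := by
    have h1 : (fun x => α x - α τ - (x - τ) • A) =o[𝓝 τ] fun x => x - τ :=
      hasDerivAt_iff_isLittleO.mp (hαd τ)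
    exact h1.comp_tendsto hu
  have hid : ∀ n, slope G t₀ (t n) = r n • A + (t n - t₀)⁻¹ • E n := by
    intro n
    have h1 : G (t n) - G t₀ = α (u n) - α τ := by rw [← heq, hGτ]
    rw [slope_def_module, h1]
    have h2 : r n • A = (t n - t₀)⁻¹ • ((u n - τ) • A) := by
      rw [smul_smul, hr]
      congr 1
      field_simp
    rw [h2, ← smul_add]
    congr 1
    simp only [hE]
    abel
  by_cases htend : Tendsto (fun n => |r n|) atTop atTop
  · exfalso
    have hrne : ∀ᶠ n in atTop, 1 ≤ |r n| := htend.eventually_ge_atTop 1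
    have hune : ∀ᶠ n in atTop, u n ≠ τ := by
      filter_upwards [hrne] with n hn
      intro h
      rw [hr] at hn
      simp only [h, sub_self, zero_div, abs_zero] at hn
      norm_num at hn
    have hut : Tendsto u atTop (𝓝[≠] τ) :=
      tendsto_nhdsWithin_iff.mpr ⟨hu, hune⟩
    have hslopeu : Tendsto (fun n => slope α τ (u n)) atTop (𝓝 A) :=
      (hasDerivAt_iff_tendsto_slope.mp (hαd τ)).comp hut
    have hrinv : Tendsto (fun n => (r n)⁻¹) atTop (𝓝 0) := by
      have h0 : Tendsto (fun n => |r n|⁻¹) atTop (𝓝 0) :=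
        tendsto_inv_atTop_zero.comp htend
      rw [tendsto_zero_iff_abs_tendsto_zero]
      refine h0.congr fun n => ?_
      simp [Function.comp, abs_inv]
    have hzero : Tendsto (fun n => (r n)⁻¹ • slope G t₀ (t n)) atTop (𝓝 ((0:ℝ) • B)) :=
      hrinv.smul hslope
    rw [zero_smul] at hzero
    have hcongr : ∀ᶠ n in atTop, (r n)⁻¹ • slope G t₀ (t n) = slope α τ (u n) := by
      filter_upwards [hrne, hune] with n h2 hun
      have h2' : r n ≠ 0 := by
        intro h; rw [h] at h2; norm_num at h2
      have h3 : t n - t₀ ≠ 0 := sub_ne_zero.mpr (htne n)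
      have h4 : u n - τ ≠ 0 := sub_ne_zero.mpr hun
      have h1 : G (t n) - G t₀ = α (u n) - α τ := by rw [← heq, hGτ]
      rw [slope_def_module, slope_def_module, h1, smul_smul]
      congr 1
      rw [hr]
      field_simp
    have hA0 : A = 0 := tendsto_nhds_unique hslopeu (hzero.congr' hcongr)
    exact himm τ (hA ▸ hA0)
  · rw [tendsto_atTop] at htend
    push_neg at htend
    obtain ⟨b, hb⟩ := htend
    have hb' : ∃ᶠ n in atTop, |r n| ≤ b := hb.mono fun n h => h.le
    obtain ⟨m1, hm1, hm1'⟩ := Filter.extraction_of_frequently_atTop hb'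
    have hmem : ∀ k, (r ∘ m1) k ∈ Icc (-b) b := fun k => abs_le.mp (hm1' k)
    obtain ⟨l, _, m2, hm2, hl⟩ := isCompact_Icc.tendsto_subseq hmem
    set m : ℕ → ℕ := m1 ∘ m2 with hm
    have hmono : StrictMono m := hm1.comp hm2
    have hmtop : Tendsto m atTop atTop := hmono.tendsto_atTop
    have hS1 : Tendsto (fun j => slope G t₀ (t (m j))) atTop (𝓝 B) :=
      hslope.comp hmtop
    have hS2 : Tendsto (fun j => r (m j) • A) atTop (𝓝 (l • A)) :=
      Tendsto.smul hl tendsto_const_nhds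
    have hS3 : Tendsto (fun j => (t (m j) - t₀)⁻¹ • E (m j)) atTop (𝓝 0) := by
      have h1 : (fun n => (t n - t₀)⁻¹ • E n) =o[atTop] fun n => (t n - t₀)⁻¹ • (u n - τ) :=
        (isBigO_refl (fun n => (t n - t₀)⁻¹) atTop).smul_isLittleO hEo
      have h2 : (fun n => (t n - t₀)⁻¹ • E n) =o[atTop] r := by
        refine h1.congr' (Eventually.of_forall fun n => rfl) (Eventually.of_forall fun n => ?_)
        show (t n - t₀)⁻¹ • (u n - τ) = (u n - τ) / (t n - t₀)
        rw [smul_eq_mul, div_eq_inv_mul]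
      have h3 : (fun j => (t (m j) - t₀)⁻¹ • E (m j)) =o[atTop] fun j => r (m j) :=
        h2.comp_tendsto hmtop
      have h4 : (fun j => r (m j)) =O[atTop] (fun _ => (1:ℝ)) := by
        rw [isBigO_iff]
        exact ⟨b, Eventually.of_forall fun j => by
          simpa [hm] using (hm1' (m2 j))⟩
      have h5 := h3.trans_isBigO h4
      rwa [isLittleO_one_iff] at h5
    have hsum : Tendsto (fun j => r (m j) • A + (t (m j) - t₀)⁻¹ • E (m j))
        atTop (𝓝 (l • A + 0)) := hS2.add hS3
    rw [add_zero] at hsum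
    have hBl : B = l • A :=
      tendsto_nhds_unique hS1 (by
        refine hsum.congr fun j => ?_
        rw [← hid (m j)])
    refine ⟨l, ?_, hBl⟩
    intro h0
    rw [h0, zero_smul] at hBl
    exact hB hBl

variable {L : ℝ} {c : ℝ × ℝ}

lemma fold_range (hL : 0 < L) (hper : Function.Periodic α L) {x : ℝ × ℝ}
    (hx : x ∈ Set.range α) : ∃ u, u ∈ Icc (0:ℝ) L ∧ α u = x := by
  obtain ⟨v, rfl⟩ := hx
  refine ⟨v - ⌊v / L⌋ * L, ⟨?_, ?_⟩, hper.sub_int_mul_eq _⟩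
  · have h1 : (⌊v / L⌋ : ℝ) ≤ v / L := Int.floor_le _
    have h2 : (⌊v / L⌋ : ℝ) * L ≤ v := by
      rw [← le_div_iff₀ hL] at *
      exact h1
    linarith
  · have h1 : v / L < ⌊v / L⌋ + 1 := Int.lt_floor_add_one _
    have h2 : v < (⌊v / L⌋ + 1) * L := by
      rw [← div_lt_iff₀ hL]
      exact_mod_cast h1
    nlinarith

lemma limit_point (hL : 0 < L) (hper : Function.Periodic α L) (hC2 : ContDiff ℝ 2 α)
    (himm : ∀ t, deriv α t ≠ 0)
    (hcentral : (fun x : ℝ × ℝ => (2:ℝ) • c - x) '' Set.range α = Set.range α)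
    {t₀ : ℝ} {t : ℕ → ℝ} (ht : Tendsto t atTop (𝓝 t₀)) (htne : ∀ n, t n ≠ t₀) :
    ∃ τ : ℝ, (α τ = (2:ℝ) • c - α t₀ ∧ det2 (deriv α τ) (deriv α t₀) = 0) ∧
      ∃ m : ℕ → ℕ, StrictMono m ∧ ∃ u : ℕ → ℝ, Tendsto u atTop (𝓝 τ) ∧
        ∀ j, α (u j) = (2:ℝ) • c - α (t (m j)) := by
  have hαd : ∀ x, HasDerivAt α (deriv α x) x := fun x =>
    ((hC2.differentiable (by norm_num)) x).hasDerivAt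
  have hγrange : ∀ s : ℝ, (2:ℝ) • c - α s ∈ Set.range α := fun s => by
    rw [← hcentral]; exact ⟨α s, ⟨s, rfl⟩, rfl⟩
  set G : ℝ → ℝ × ℝ := fun s => (2:ℝ) • c - α s with hGdef
  have hG : HasDerivAt G (-deriv α t₀) t₀ := (hαd t₀).const_sub _
  have hGc : Continuous G := by
    have : Continuous α := hC2.continuous
    fun_prop
  have hchoice : ∀ n : ℕ, ∃ u, u ∈ Icc (0:ℝ) L ∧ α u = G (t n) := fun n =>
    fold_range hL hper (hγrange (t n))
  choose u0 hu0 hu0' using hchoice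
  obtain ⟨τ, _, m, hm, hum⟩ := isCompact_Icc.tendsto_subseq hu0
  have hmtop : Tendsto m atTop atTop := hm.tendsto_atTop
  have hτ : α τ = G t₀ := by
    have h1 : Tendsto (fun j => α (u0 (m j))) atTop (𝓝 (α τ)) :=
      (hC2.continuous.tendsto τ).comp hum
    have h2 : Tendsto (fun j => α (u0 (m j))) atTop (𝓝 (G t₀)) := by
      have : Tendsto (fun j => G (t (m j))) atTop (𝓝 (G t₀)) :=
        (hGc.tendsto t₀).comp (ht.comp hmtop)
      exact this.congr fun j => (hu0' (m j)).symm
    exact tendsto_nhds_unique h1 h2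
  obtain ⟨l, hl0, hlB⟩ := seq_key hC2 himm hG (neg_ne_zero.mpr (himm t₀))
    (ht.comp hmtop) (fun j => htne (m j)) hum hτ.symm (fun j => hu0' (m j))
  refine ⟨τ, ⟨hτ, ?_⟩, m, hm, fun j => u0 (m j), hum, fun j => hu0' (m j)⟩
  have h1 : deriv α t₀ = (-l) • deriv α τ := by
    rw [neg_smul, ← hlB, neg_neg]
  rw [h1]
  exact det2_smul_self _ _

lemma modL (hL : 0 < L) (himm : ∀ t, deriv α t ≠ 0)
    (hclean : ∀ s t : ℝ, α s = α t → (∀ k : ℤ, s - t ≠ k * L) →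
      LinearIndependent ℝ ![deriv α s, deriv α t])
    {t s₁ s₂ : ℝ}
    (h1 : α s₁ = (2:ℝ) • c - α t) (h1' : det2 (deriv α s₁) (deriv α t) = 0)
    (h2 : α s₂ = (2:ℝ) • c - α t) (h2' : det2 (deriv α s₂) (deriv α t) = 0) :
    ∃ k : ℤ, s₁ - s₂ = k * L := by
  by_contra hk
  push_neg at hk
  have hα : α s₁ = α s₂ := by rw [h1, h2]
  have hli := hclean s₁ s₂ hα hk
  exact not_li_of_det2 (himm s₂) (det2_trans (himm t) h1' h2') hli

lemma branch (hL : 0 < L) (hper : Function.Periodic α L) (hC2 : ContDiff ℝ 2 α)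
    (himm : ∀ t, deriv α t ≠ 0)
    (hclean : ∀ s t : ℝ, α s = α t → (∀ k : ℤ, s - t ≠ k * L) →
      LinearIndependent ℝ ![deriv α s, deriv α t])
    (hcentral : (fun x : ℝ × ℝ => (2:ℝ) • c - x) '' Set.range α = Set.range α)
    {t₀ s₀ : ℝ} (h1 : α s₀ = (2:ℝ) • c - α t₀)
    (h2 : det2 (deriv α s₀) (deriv α t₀) = 0) {δ : ℝ} (hδ : 0 < δ) :
    ∀ᶠ t in 𝓝 t₀, ∃ τ, |τ - s₀| < δ ∧ α τ = (2:ℝ) • c - α t := by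
  set Q : ℝ → Prop := fun t => ∃ τ, |τ - s₀| < δ ∧ α τ = (2:ℝ) • c - α t with hQ
  by_contra hcon
  rw [Filter.not_eventually] at hcon
  have hseq : ∀ n : ℕ, ∃ x, |x - t₀| < 1 / (n + 1) ∧ ¬ Q x := by
    intro n
    have hball : Metric.ball t₀ (1 / (n + 1)) ∈ 𝓝 t₀ :=
      Metric.ball_mem_nhds t₀ (by positivity)
    obtain ⟨x, hx1, hx2⟩ := Filter.frequently_iff.mp hcon hball
    exact ⟨x, by simpa [Real.dist_eq] using hx1, hx2⟩
  choose t ht1 ht2 using hseq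
  have hQ0 : Q t₀ := ⟨s₀, by simpa using hδ, h1⟩
  have htne : ∀ n, t n ≠ t₀ := fun n h => ht2 n (h ▸ hQ0)
  have ht : Tendsto t atTop (𝓝 t₀) := by
    rw [tendsto_iff_dist_tendsto_zero]
    refine squeeze_zero (g := fun n : ℕ => 1 / ((n : ℝ) + 1)) (fun n => dist_nonneg)
      (fun n => le_of_lt (by simpa [Real.dist_eq] using ht1 n))
      tendsto_one_div_add_atTop_nhds_zero_nat
  obtain ⟨τ, ⟨hτ1, hτ2⟩, m, hm, u, hu, huα⟩ :=
    limit_point hL hper hC2 himm hcentral ht htne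
  obtain ⟨k, hk⟩ := modL hL himm hclean hτ1 hτ2 h1 h2
  have hulim : Tendsto (fun j => u j - k * L) atTop (𝓝 s₀) := by
    have := hu.sub_const (k * L)
    rwa [show τ - k * L = s₀ by linarith] at this
  have hev : ∀ᶠ j in atTop, |u j - k * L - s₀| < δ := by
    rw [Metric.tendsto_nhds] at hulim
    filter_upwards [hulim δ hδ] with j hj
    rw [Real.dist_eq] at hj
    exact hj
  obtain ⟨j, hj⟩ := hev.exists
  exact ht2 (m j) ⟨u j - k * L, hj, by rw [hper.sub_int_mul_eq]; exact huα j⟩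

lemma local_lift (hL : 0 < L) (hper : Function.Periodic α L) (hC2 : ContDiff ℝ 2 α)
    (himm : ∀ t, deriv α t ≠ 0)
    (hclean : ∀ s t : ℝ, α s = α t → (∀ k : ℤ, s - t ≠ k * L) →
      LinearIndependent ℝ ![deriv α s, deriv α t])
    (hcentral : (fun x : ℝ × ℝ => (2:ℝ) • c - x) '' Set.range α = Set.range α)
    {t₀ s₀ : ℝ} (h1 : α s₀ = (2:ℝ) • c - α t₀)
    (h2 : det2 (deriv α s₀) (deriv α t₀) = 0) :
    ∃ ψ : ℝ → ℝ, ψ t₀ = s₀ ∧ ∀ᶠ t in 𝓝 t₀,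
      (α (ψ t) = (2:ℝ) • c - α t ∧ det2 (deriv α (ψ t)) (deriv α t) = 0 ∧
        ∃ d, HasDerivAt ψ d t ∧ d • deriv α (ψ t) = -deriv α t) := by
  have hαd : ∀ x, HasDerivAt α (deriv α x) x := fun x =>
    ((hC2.differentiable (by norm_num)) x).hasDerivAt
  have hdc : Continuous (deriv α) := by
    have h := (contDiff_succ_iff_deriv (n := 1) (f := α)).mp
      (by exact_mod_cast hC2)
    exact h.2.2.continuous
  set v := deriv α s₀ with hv
  have hvne : v ≠ 0 := himm s₀
  set θ : ℝ → ℝ := fun τ => dot2 (α τ) v with hθdef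
  have hθd : ∀ τ, HasDerivAt θ (dot2 (deriv α τ) v) τ := fun τ =>
    dot2_hasDerivAt (hαd τ) v
  have hθc : ContDiff ℝ 1 θ := by
    have h1' : ContDiff ℝ 1 α := hC2.of_le (by norm_num)
    exact ((contDiff_fst.comp h1').mul contDiff_const).add
      ((contDiff_snd.comp h1').mul contDiff_const)
  have hne : dot2 v v ≠ 0 := dot2_self_ne hvne
  have hstrict : HasStrictDerivAt θ (dot2 v v) s₀ := by
    have h := (hθc.contDiffAt (x := s₀)).hasStrictDerivAt one_ne_zero
    rwa [(hθd s₀).deriv] at h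
  set Φ := (hstrict.hasStrictFDerivAt_equiv hne).toOpenPartialHomeomorph θ with hΦdef
  have hΦcoe : (Φ : ℝ → ℝ) = θ :=
    (hstrict.hasStrictFDerivAt_equiv hne).toOpenPartialHomeomorph_coe
  have hs₀mem : s₀ ∈ Φ.source :=
    (hstrict.hasStrictFDerivAt_equiv hne).mem_toOpenPartialHomeomorph_source
  have hθs₀mem : θ s₀ ∈ Φ.target :=
    (hstrict.hasStrictFDerivAt_equiv hne).image_mem_toOpenPartialHomeomorph_target
  have hdotc : Continuous fun τ => dot2 (deriv α τ) v := by
    simp only [dot2]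
    exact ((continuous_fst.comp hdc).mul continuous_const).add
      ((continuous_snd.comp hdc).mul continuous_const)
  have hopen : IsOpen (Φ.source ∩ {τ | dot2 (deriv α τ) v ≠ 0}) :=
    Φ.open_source.inter (hdotc.isOpen_preimage _ isOpen_ne)
  have hs₀mem2 : s₀ ∈ Φ.source ∩ {τ | dot2 (deriv α τ) v ≠ 0} :=
    ⟨hs₀mem, hne⟩
  obtain ⟨δ, hδpos, hδsub⟩ := Metric.isOpen_iff.mp hopen s₀ hs₀mem2
  set h : ℝ → ℝ := fun t => dot2 ((2:ℝ) • c - α t) v with hhdef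
  have hhd : ∀ t, HasDerivAt h (dot2 (-deriv α t) v) t := fun t =>
    dot2_hasDerivAt ((hαd t).const_sub _) v
  have hht₀ : h t₀ = θ s₀ := by simp only [hhdef, hθdef, h1]
  have hhc : Continuous h := continuous_iff_continuousAt.mpr fun t => (hhd t).continuousAt
  have ev2 : ∀ᶠ t in 𝓝 t₀, h t ∈ Φ.target := by
    have hmem : Φ.target ∈ 𝓝 (h t₀) := Φ.open_target.mem_nhds (hht₀ ▸ hθs₀mem)
    exact hhc.continuousAt.preimage_mem_nhds hmem
  have ev1 := branch hL hper hC2 himm hclean hcentral h1 h2 hδpos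
  have core : ∀ᶠ t in 𝓝 t₀, Φ.symm (h t) ∈ Metric.ball s₀ δ ∧
      α (Φ.symm (h t)) = (2:ℝ) • c - α t := by
    filter_upwards [ev1] with t ht
    obtain ⟨τ, hτ1, hτ2⟩ := ht
    have hτball : τ ∈ Metric.ball s₀ δ := by
      rw [Metric.mem_ball, Real.dist_eq]; exact hτ1
    have hτsrc : τ ∈ Φ.source := (hδsub hτball).1
    have hhτ : h t = Φ τ := by
      rw [hΦcoe]; simp only [hhdef, hθdef]; rw [← hτ2]
    rw [hhτ, Φ.left_inv hτsrc]
    exact ⟨hτball, hτ2⟩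
  refine ⟨fun t => Φ.symm (h t), ?_, ?_⟩
  · show Φ.symm (h t₀) = s₀
    rw [hht₀, show θ s₀ = Φ s₀ from (by rw [hΦcoe])]
    exact Φ.left_inv hs₀mem
  have core2 := core.eventually_nhds
  filter_upwards [core, ev2, core2] with t hc htar hcore2
  obtain ⟨hball, hαψ⟩ := hc
  have hsrc : Φ.symm (h t) ∈ Φ.source := (hδsub hball).1
  have hdotne : dot2 (deriv α (Φ.symm (h t))) v ≠ 0 := (hδsub hball).2
  have hg : ContinuousAt Φ.symm (h t) :=
    Φ.symm.continuousAt (by rwa [OpenPartialHomeomorph.symm_source])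
  have hfg : ∀ᶠ z in 𝓝 (h t), θ (Φ.symm z) = z := by
    have hmem : Φ.target ∈ 𝓝 (h t) := Φ.open_target.mem_nhds htar
    filter_upwards [hmem] with z hz
    rw [← hΦcoe]
    exact Φ.right_inv hz
  have hinv : HasDerivAt Φ.symm (dot2 (deriv α (Φ.symm (h t))) v)⁻¹ (h t) :=
    HasDerivAt.of_local_left_inverse hg (hθd _) hdotne hfg
  have hψd : HasDerivAt (fun x => Φ.symm (h x))
      ((dot2 (deriv α (Φ.symm (h t))) v)⁻¹ * dot2 (-deriv α t) v) t :=
    hinv.comp t (hhd t)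
  set d : ℝ := (dot2 (deriv α (Φ.symm (h t))) v)⁻¹ * dot2 (-deriv α t) v with hddef
  have hαψd : HasDerivAt (fun x => α (Φ.symm (h x))) (d • deriv α (Φ.symm (h t))) t :=
    (hαd _).scomp t hψd
  have hγd : HasDerivAt (fun x => (2:ℝ) • c - α x) (-deriv α t) t := (hαd t).const_sub _
  have hcongr : (fun x => α (Φ.symm (h x))) =ᶠ[𝓝 t] fun x => (2:ℝ) • c - α x := by
    filter_upwards [hcore2] with x hx using hx.2
  have hαψd' : HasDerivAt (fun x => (2:ℝ) • c - α x) (d • deriv α (Φ.symm (h t))) t :=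
    hαψd.congr_of_eventuallyEq hcongr.symm
  have hd : d • deriv α (Φ.symm (h t)) = -deriv α t := hαψd'.unique hγd
  refine ⟨hαψ, ?_, d, hψd, hd⟩
  have hrw : deriv α t = (-d) • deriv α (Φ.symm (h t)) := by rw [neg_smul, hd, neg_neg]
  rw [hrw]
  exact det2_smul_self _ _

end TestB
end Stmt5Aux


/-- A clean C² loop whose image is centrally symmetric about `c` is reparametrized by
the central reflection: `2c − α = α ∘ φ` for some C¹ diffeomorphism `φ` of the circle. -/
theorem stmt5 (L : ℝ) (hL : 0 < L) (α : ℝ → ℝ × ℝ) (c : ℝ × ℝ)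
    (hper : Function.Periodic α L) (hC2 : ContDiff ℝ 2 α)
    (himm : ∀ t, deriv α t ≠ 0)
    (hclean : ∀ s t : ℝ, α s = α t → (∀ k : ℤ, s - t ≠ k * L) →
      LinearIndependent ℝ ![deriv α s, deriv α t])
    (hcentral : (fun x : ℝ × ℝ => (2:ℝ) • c - x) '' Set.range α = Set.range α) :
    ∃ φ : ℝ → ℝ, ContDiff ℝ 1 φ ∧ (∀ t, deriv φ t ≠ 0) ∧
      ((∀ t, φ (t + L) = φ t + L) ∨ (∀ t, φ (t + L) = φ t - L)) ∧
      (∀ t, (2:ℝ) • c - α t = α (φ t)) := by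
  have hαd : ∀ x, HasDerivAt α (deriv α x) x := fun x =>
    ((hC2.differentiable (by norm_num)) x).hasDerivAt
  have hdc : Continuous (deriv α) := by
    have h := (contDiff_succ_iff_deriv (n := 1) (f := α)).mp (by exact_mod_cast hC2)
    exact h.2.2.continuous
  have hperd : ∀ (k : ℤ) (x : ℝ), deriv α (x + k * L) = deriv α x := by
    intro k x
    have hfun : (fun y => α (y + k * L)) = α := (hper.int_mul k).funext
    calc deriv α (x + k * L) = deriv (fun y => α (y + k * L)) x :=
          (deriv_comp_add_const α (k * L) x).symm
      _ = deriv α x := by rw [hfun]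
  have hpera : ∀ (k : ℤ) (x : ℝ), α (x + k * L) = α x := fun k x => (hper.int_mul k) x
  have hPne : ∀ t₀ : ℝ, ∃ s, α s = (2:ℝ) • c - α t₀ ∧ det2 (deriv α s) (deriv α t₀) = 0 := by
    intro t₀
    have ht : Tendsto (fun n : ℕ => t₀ + 1 / ((n:ℝ) + 1)) atTop (𝓝 t₀) := by
      have h0 : Tendsto (fun n : ℕ => 1 / ((n:ℝ) + 1)) atTop (𝓝 0) :=
        tendsto_one_div_add_atTop_nhds_zero_nat
      simpa using tendsto_const_nhds.add h0
    have htne : ∀ n : ℕ, t₀ + 1 / ((n:ℝ) + 1) ≠ t₀ := by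
      intro n h
      have hpos : (0:ℝ) < 1 / ((n:ℝ) + 1) := by positivity
      linarith [h]
    obtain ⟨τ, hτ, _⟩ := limit_point hL hper hC2 himm hcentral ht htne
    exact ⟨τ, hτ⟩
  choose sP hsP1 hsP2 using hPne
  set w : ℝ → ℝ × ℝ := fun t => deriv α (sP t) with hwdef
  have hwne : ∀ t, w t ≠ 0 := fun t => himm (sP t)
  set g : ℝ → ℝ := fun t => -(dot2 (deriv α t) (w t)) / dot2 (w t) (w t) with hgdef
  have hwP : ∀ t s, α s = (2:ℝ) • c - α t → det2 (deriv α s) (deriv α t) = 0 →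
      deriv α s = w t := by
    intro t s hs1 hs2
    obtain ⟨k, hk⟩ := modL hL himm hclean hs1 hs2 (hsP1 t) (hsP2 t)
    have hs : s = sP t + k * L := by linarith
    rw [hwdef]
    simp only
    rw [hs, hperd]
  have hgc : Continuous g := by
    rw [continuous_iff_continuousAt]
    intro t₀
    obtain ⟨ψ, hψ0, hψev⟩ := local_lift hL hper hC2 himm hclean hcentral (hsP1 t₀) (hsP2 t₀)
    have hwψ : ∀ᶠ t in 𝓝 t₀, w t = deriv α (ψ t) := by
      filter_upwards [hψev] with t ht
      exact (hwP t (ψ t) ht.1 ht.2.1).symm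
    have hgψ : g =ᶠ[𝓝 t₀] fun t => -(dot2 (deriv α t) (deriv α (ψ t))) /
        dot2 (deriv α (ψ t)) (deriv α (ψ t)) := by
      filter_upwards [hwψ] with t ht
      rw [hgdef]
      simp only
      rw [ht]
    refine ContinuousAt.congr ?_ hgψ.symm
    have hψc : ContinuousAt ψ t₀ := by
      obtain ⟨d, hd, _⟩ := (hψev.self_of_nhds).2.2
      exact hd.continuousAt
    have hc1 : ContinuousAt (fun t => deriv α (ψ t)) t₀ := hdc.continuousAt.comp hψc
    have hden : dot2 (deriv α (ψ t₀)) (deriv α (ψ t₀)) ≠ 0 := dot2_self_ne (himm _)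
    have hcd : ContinuousAt (deriv α) t₀ := hdc.continuousAt
    refine ContinuousAt.div ?_ ?_ hden
    · simp only [dot2]
      exact (((hcd.fst.mul hc1.fst).add (hcd.snd.mul hc1.snd))).neg
    · simp only [dot2]
      exact (hc1.fst.mul hc1.fst).add (hc1.snd.mul hc1.snd)
  set φ : ℝ → ℝ := fun t => sP 0 + ∫ x in (0:ℝ)..t, g x with hφdef
  have hφd : ∀ t, HasDerivAt φ (g t) t := by
    intro t
    have h1 : HasDerivAt (fun u => ∫ x in (0:ℝ)..u, g x) (g t) t :=
      intervalIntegral.integral_hasDerivAt_right (hgc.intervalIntegrable _ _)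
        (hgc.stronglyMeasurableAtFilter _ _) hgc.continuousAt
    simpa [hφdef] using h1.const_add (sP 0)
  have hφc : Continuous φ := continuous_iff_continuousAt.mpr fun t => (hφd t).continuousAt
  set T : Set ℝ := {t | α (φ t) = (2:ℝ) • c - α t ∧ det2 (deriv α (φ t)) (deriv α t) = 0}
    with hT
  have hT0 : (0:ℝ) ∈ T := by
    have h0 : φ 0 = sP 0 := by simp [hφdef]
    constructor
    · rw [h0]; exact hsP1 0
    · rw [h0]; exact hsP2 0
  have hTclosed : IsClosed T := by
    have hc1 : Continuous fun t => α (φ t) - ((2:ℝ) • c - α t) :=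
      (hC2.continuous.comp hφc).sub (continuous_const.sub hC2.continuous)
    have hc2 : Continuous fun t => det2 (deriv α (φ t)) (deriv α t) := by
      simp only [det2]
      have hd1 : Continuous fun t => deriv α (φ t) := hdc.comp hφc
      exact (hd1.fst.mul hdc.snd).sub (hd1.snd.mul hdc.fst)
    have hTeq : T = (fun t => α (φ t) - ((2:ℝ) • c - α t)) ⁻¹' {0} ∩
        (fun t => det2 (deriv α (φ t)) (deriv α t)) ⁻¹' {0} := by
      ext t
      simp only [hT, mem_setOf_eq, mem_inter_iff, mem_preimage, mem_singleton_iff, sub_eq_zero]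
    rw [hTeq]
    exact (isClosed_singleton.preimage hc1).inter (isClosed_singleton.preimage hc2)
  have hTopen : IsOpen T := by
    rw [isOpen_iff_mem_nhds]
    intro t₀ ht₀
    obtain ⟨hα0, hdet0⟩ := ht₀
    obtain ⟨ψ, hψ0, hψev⟩ := local_lift hL hper hC2 himm hclean hcentral hα0 hdet0
    obtain ⟨ε, hε, hball⟩ := Metric.eventually_nhds_iff_ball.mp hψev
    have hψg : ∀ x ∈ Metric.ball t₀ ε, HasDerivAt ψ (g x) x := by
      intro x hx
      obtain ⟨hx1, hx2, d, hd, hid⟩ := hball x hx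
      have hwx : deriv α (ψ x) = w x := hwP x (ψ x) hx1 hx2
      have hdg : d = g x := by
        rw [hwx] at hid
        have h4 : d * dot2 (w x) (w x) = -(dot2 (deriv α x) (w x)) := by
          have h3 : dot2 (d • w x) (w x) = dot2 (-deriv α x) (w x) := by rw [hid]
          simp only [dot2, Prod.smul_fst, Prod.smul_snd, smul_eq_mul, Prod.fst_neg,
            Prod.snd_neg] at h3 ⊢
          nlinarith [h3]
        have h5 := dot2_self_ne (hwne x)
        rw [hgdef]
        simp only
        field_simp
        linarith [h4]
      rw [← hdg]
      exact hd
    have hdiff : ∀ x ∈ Metric.ball t₀ ε, HasDerivWithinAt (fun y => φ y - ψ y) 0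
        (Metric.ball t₀ ε) x := by
      intro x hx
      have h := (hφd x).sub (hψg x hx)
      rw [sub_self] at h
      exact h.hasDerivWithinAt
    have hconst : ∀ x ∈ Metric.ball t₀ ε, φ x - ψ x = φ t₀ - ψ t₀ := by
      intro x hx
      have hconv : Convex ℝ (Metric.ball t₀ ε) := convex_ball _ _
      have hb := hconv.norm_image_sub_le_of_norm_hasDerivWithin_le
        (fun y hy => hdiff y hy) (C := 0) (fun y hy => by simp)
        (Metric.mem_ball_self hε) hx
      have h0 : ‖(φ x - ψ x) - (φ t₀ - ψ t₀)‖ ≤ 0 := by simpa using hb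
      have h1 := norm_nonneg ((φ x - ψ x) - (φ t₀ - ψ t₀))
      have h2 : (φ x - ψ x) - (φ t₀ - ψ t₀) = 0 := by
        rw [← norm_eq_zero]; linarith
      linarith [sub_eq_zero.mp h2]
    have hφψ : ∀ x ∈ Metric.ball t₀ ε, φ x = ψ x := by
      intro x hx
      have h := hconst x hx
      rw [hψ0] at h
      linarith
    have hsub : Metric.ball t₀ ε ⊆ T := by
      intro x hx
      obtain ⟨hx1, hx2, _⟩ := hball x hx
      exact ⟨by rw [hφψ x hx]; exact hx1, by rw [hφψ x hx]; exact hx2⟩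
    exact Filter.mem_of_superset (Metric.ball_mem_nhds _ hε) hsub
  have hTuniv : T = univ := IsClopen.eq_univ ⟨hTclosed, hTopen⟩ ⟨0, hT0⟩
  have hmem : ∀ t, t ∈ T := fun t => hTuniv ▸ mem_univ t
  have hmain : ∀ t, α (φ t) = (2:ℝ) • c - α t := fun t => (hmem t).1
  have hdet : ∀ t, det2 (deriv α (φ t)) (deriv α t) = 0 := fun t => (hmem t).2
  have hφderiv : deriv φ = g := funext fun t => (hφd t).deriv
  have hgne : ∀ t, g t ≠ 0 := by
    intro t hg0
    have hψd2 : HasDerivAt (fun x => α (φ x)) (g t • deriv α (φ t)) t :=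
      (hαd _).scomp t (hφd t)
    have heq2 : (fun x => α (φ x)) = fun x => (2:ℝ) • c - α x := funext hmain
    rw [heq2] at hψd2
    have hγd : HasDerivAt (fun x => (2:ℝ) • c - α x) (-deriv α t) t := (hαd t).const_sub _
    have hu := hψd2.unique hγd
    rw [hg0, zero_smul] at hu
    exact himm t (by rw [← neg_neg (deriv α t), ← hu, neg_zero])
  have hshift : ∀ t, ∃ k : ℤ, φ (t + L) - φ t = k * L := by
    intro t
    have haL : α (t + L) = α t := by
      have hh := hpera 1 t; push_cast at hh; simpa using hh
    have hdL : deriv α (t + L) = deriv α t := by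
      have hh := hperd 1 t; push_cast at hh; simpa using hh
    have h1 : α (φ (t + L)) = (2:ℝ) • c - α t := by
      rw [hmain (t + L), haL]
    have h2 : det2 (deriv α (φ (t + L))) (deriv α t) = 0 := by
      have hh := hdet (t + L)
      rwa [hdL] at hh
    exact modL hL himm hclean h1 h2 (hmain t) (hdet t)
  have hshiftc : Continuous fun t => φ (t + L) - φ t :=
    (hφc.comp (continuous_id.add continuous_const)).sub hφc
  obtain ⟨k, hk⟩ := hshift 0
  have hkL : ∀ t : ℝ, φ (t + L) = φ t + (k:ℝ) * L := by
    intro t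
    have hc2 := int_const hL hshiftc hshift t 0
    rw [hk] at hc2
    linarith
  have hχα : ∀ t, α (φ (φ t)) = α t := by
    intro t
    rw [hmain (φ t), hmain t, sub_sub_cancel]
  have hχdet : ∀ t, det2 (deriv α (φ (φ t))) (deriv α t) = 0 := by
    intro t
    have hχd : HasDerivAt (fun x => φ (φ x)) (g (φ t) * g t) t := (hφd (φ t)).comp t (hφd t)
    have hαχd : HasDerivAt (fun x => α (φ (φ x))) ((g (φ t) * g t) • deriv α (φ (φ t))) t :=
      (hαd _).scomp t hχd
    have heq3 : (fun x => α (φ (φ x))) = α := funext hχα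
    rw [heq3] at hαχd
    have hu := hαχd.unique (hαd t)
    rw [← hu]
    exact det2_smul_self _ _
  have hχshift : ∀ t, ∃ m : ℤ, φ (φ t) - t = m * L := by
    intro t
    by_contra hm
    push_neg at hm
    exact not_li_of_det2 (himm t) (hχdet t) (hclean (φ (φ t)) t (hχα t) hm)
  have hχc : Continuous fun t => φ (φ t) - t := (hφc.comp hφc).sub continuous_id
  obtain ⟨m0, hm0⟩ := hχshift 0
  have hχconst : ∀ t, φ (φ t) - t = (m0:ℝ) * L := by
    intro t
    have hc3 := int_const hL hχc hχshift t 0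
    rw [hc3]
    exact hm0
  have hstepdown : ∀ x : ℝ, φ (x - L) = φ x - (k:ℝ) * L := by
    intro x
    have hh := hkL (x - L)
    rw [sub_add_cancel] at hh
    linarith
  have hiter : ∀ (j : ℤ) (x : ℝ), φ (x + (j:ℝ) * L) = φ x + (j:ℝ) * (k:ℝ) * L := by
    intro j
    induction j using Int.induction_on with
    | zero => intro x; simp
    | succ i ih =>
      intro x
      push_cast at ih ⊢
      rw [show x + ((i:ℝ) + 1) * L = (x + (i:ℝ) * L) + L by ring, hkL, ih]
      ring
    | pred i ih =>
      intro x
      push_cast at ih ⊢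
      rw [show x + (-(i:ℝ) - 1) * L = (x + (-(i:ℝ)) * L) - L by ring, hstepdown, ih]
      ring
  have hk2 : k * k = 1 := by
    have h1 : φ (φ (0 + L)) - (0 + L) = (m0:ℝ) * L := hχconst (0 + L)
    have h2 : φ (0 + L) = φ 0 + (k:ℝ) * L := hkL 0
    have h3 : φ (φ 0 + (k:ℝ) * L) = φ (φ 0) + (k:ℝ) * (k:ℝ) * L := hiter k (φ 0)
    have h4 : φ (φ 0) - 0 = (m0:ℝ) * L := hm0
    rw [h2, h3] at h1
    have h5 : (k:ℝ) * (k:ℝ) * L = 1 * L := by linarith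
    have h6 : (k:ℝ) * (k:ℝ) = 1 := mul_right_cancel₀ (ne_of_gt hL) h5
    exact_mod_cast h6
  refine ⟨φ, ?_, ?_, ?_, fun t => (hmain t).symm⟩
  · rw [contDiff_one_iff_deriv]
    exact ⟨fun t => (hφd t).differentiableAt, by rw [hφderiv]; exact hgc⟩
  · intro t
    rw [hφderiv]
    exact hgne t
  · rcases mul_self_eq_one_iff.mp hk2 with h | h
    · left
      intro t
      rw [hkL t, h]
      push_cast
      ring
    · right
      intro t
      rw [hkL t, h]
      push_cast
      ring
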